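/- Let d ≥ 1 and a ∈ ℝ. The function s ↦ {(1 − ‖s‖₁) s_1 ⋯ s_d}^{−a} is Lebesgue-integrable on the simplex S_d if and only if a < 1. -/

import Mathlib

open MeasureTheory Filter Topology
open scoped ENNReal BigOperators

noncomputable section

/-- The d-dimensional simplex `S_d = {s ∈ [0,1]^d : s_1 + ⋯ + s_d ≤ 1}`. -/
def Sd (d : ℕ) : Set (Fin d → ℝ) :=
  {s | (∀ i, 0 ≤ s i ∧ s i ≤ 1) ∧ ∑ i, s i ≤ 1}

/-- The Dirichlet density `K_{u,v}` on `S_d` (0 outside). -/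
def dirK (d : ℕ) (u : Fin d → ℝ) (v : ℝ) : (Fin d → ℝ) → ℝ :=
  Set.indicator (Sd d)
    (fun s => Real.Gamma (v + ∑ i, u i) / (Real.Gamma v * ∏ i, Real.Gamma (u i)) *
      (1 - ∑ i, s i) ^ (v - 1) * ∏ i, (s i) ^ (u i - 1))

/-- The Dirichlet kernel `K_{s/b+1, (1-‖s‖₁)/b+1}` at location `s` with bandwidth `b`. -/
def dirKb (d : ℕ) (b : ℝ) (s : Fin d → ℝ) : (Fin d → ℝ) → ℝ :=
  dirK d (fun i => s i / b + 1) ((1 - ∑ i, s i) / b + 1)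

/-- The Dirichlet kernel density estimator based on the sample `X`. -/
def fhat (d n : ℕ) (b : ℝ) (X : Fin n → Fin d → ℝ) (s : Fin d → ℝ) : ℝ :=
  (n : ℝ)⁻¹ * ∑ i, dirKb d b s (X i)

/-- `m` = the largest integer strictly less than `β` (for `β > 0`). -/
def mOf (β : ℝ) : ℕ := ⌈β⌉₊ - 1

/-- Partial derivative of order `j` in the directions `v` (on the interior of the simplex). -/
def Dpartial (d j : ℕ) (f : (Fin d → ℝ) → ℝ) (v : Fin j → Fin d) (s : Fin d → ℝ) : ℝ :=
  iteratedFDerivWithin ℝ j f (interior (Sd d)) s fun i => Pi.single (v i) 1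

/-- The Hölder class `Σ(d, β, L)` of probability densities supported on `S_d`. -/
def holderClass (d : ℕ) (β L : ℝ) : Set ((Fin d → ℝ) → ℝ) :=
  {f | (∀ s, 0 ≤ f s) ∧ (∀ s, s ∉ Sd d → f s = 0) ∧ (∫ s in Sd d, f s) = 1 ∧
    ContDiffOn ℝ (mOf β) f (interior (Sd d)) ∧
    ∀ v : Fin (mOf β) → Fin d, ∀ s ∈ interior (Sd d), ∀ t ∈ interior (Sd d),
      |Dpartial d (mOf β) f v s - Dpartial d (mOf β) f v t| ≤
        L * (∑ i, |s i - t i|) ^ (β - (mOf β : ℝ))}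

/-- `E_f ‖f̂_{n,b} − f‖_p^p`: expectation, under i.i.d. sampling of `X_1, …, X_n` from the
density `f`, of the `p`-th power of the `L^p` distance between `f̂_{n,b}` and `f` on `S_d`. -/
def lpRiskPow (d n : ℕ) (b p : ℝ) (f : (Fin d → ℝ) → ℝ) : ℝ :=
  ∫ ω : Fin n → Fin d → ℝ,
    (∏ i, f (ω i)) * ∫ s in Sd d, |fhat d n b ω s - f s| ^ p


section AuxiliaryLemmas

open Set

lemma measurable_rpow_const' (c : ℝ) : Measurable fun x : ℝ => x ^ c := by
  classical
  have h : (fun x : ℝ => x ^ c) = fun x =>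
      if x < 0 then Real.exp (Real.log x * c) * Real.cos (c * Real.pi)
      else if x = 0 then (if c = 0 then 1 else 0)
      else Real.exp (Real.log x * c) := by
    funext x
    rcases lt_trichotomy x 0 with hx | hx | hx
    · rw [if_pos hx, Real.rpow_def_of_neg hx]
    · subst hx
      rw [if_neg (lt_irrefl _), if_pos rfl]
      rcases eq_or_ne c 0 with rfl | hc
      · simp
      · simp [Real.zero_rpow hc, hc]
    · rw [if_neg (not_lt.2 hx.le), if_neg hx.ne', Real.rpow_def_of_pos hx]
  rw [h]
  refine Measurable.ite measurableSet_Iio ((Real.measurable_log.mul measurable_const).exp.mul measurable_const) ?_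
  exact Measurable.ite (MeasurableSet.singleton 0) measurable_const
    ((Real.measurable_log.mul measurable_const).exp)

lemma Sd_measurable (d : ℕ) : MeasurableSet (Sd d) := by
  have h : Sd d = (⋂ i, {s : Fin d → ℝ | 0 ≤ s i ∧ s i ≤ 1}) ∩ {s | ∑ i, s i ≤ 1} := by
    ext s; simp [Sd, Set.mem_iInter]
  rw [h]
  refine MeasurableSet.inter (MeasurableSet.iInter fun i => ?_) ?_
  · exact (measurableSet_le measurable_const (measurable_pi_apply i)).inter
      (measurableSet_le (measurable_pi_apply i) measurable_const)
  · exact measurableSet_le (Finset.measurable_sum _ fun i _ => measurable_pi_apply i)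
      measurable_const

def Tmap (d : ℕ) (j : Fin d) : (Fin d → ℝ) → (Fin d → ℝ) :=
  fun s => Function.update s j (1 - ∑ i, s i)

lemma Tsum {d : ℕ} (j : Fin d) (s : Fin d → ℝ) : ∑ i, Tmap d j s i = 1 - s j := by
  classical
  rw [Tmap, Finset.sum_update_of_mem (Finset.mem_univ j), ← Finset.erase_eq,
    Finset.sum_erase_eq_sub (Finset.mem_univ j)]
  ring

lemma Tinvol {d : ℕ} (j : Fin d) (s : Fin d → ℝ) : Tmap d j (Tmap d j s) = s := by
  classical
  have h1 : Tmap d j s j = 1 - ∑ i, s i := Function.update_self _ _ _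
  have := Tsum j s
  rw [Tmap, this]
  have : (1 : ℝ) - (1 - s j) = s j := by ring
  rw [this]
  rw [Tmap]
  rw [Function.update_idem, Function.update_eq_self]

lemma Tmeas {d : ℕ} (j : Fin d) : Measurable (Tmap d j) := by
  classical
  refine measurable_pi_lambda _ fun k => ?_
  simp only [Tmap, Function.update_apply]
  by_cases hk : k = j
  · simp only [if_pos hk]
    exact measurable_const.sub (Finset.measurable_sum Finset.univ
      fun i _ => measurable_pi_apply i)
  · simp only [if_neg hk]
    exact measurable_pi_apply k

lemma TmapsTo {d : ℕ} (j : Fin d) : Set.MapsTo (Tmap d j) (Sd d) (Sd d) := by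
  classical
  intro s hs
  obtain ⟨h1, h2⟩ := hs
  have hsum0 : 0 ≤ ∑ i, s i := Finset.sum_nonneg fun i _ => (h1 i).1
  constructor
  · intro i
    rcases eq_or_ne i j with rfl | hij
    · rw [Tmap, Function.update_self]
      constructor <;> linarith
    · rw [Tmap, Function.update_of_ne hij]
      exact h1 i
  · rw [Tsum]
    have := (h1 j).1
    linarith

lemma Tpreim {d : ℕ} (j : Fin d) : Tmap d j ⁻¹' (Sd d) = Sd d := by
  ext s
  constructor
  · intro hs
    have := TmapsTo j hs
    rwa [Tinvol] at this
  · intro hs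
    exact TmapsTo j hs

def Tlin (d : ℕ) (j : Fin d) : (Fin d → ℝ) →ₗ[ℝ] (Fin d → ℝ) where
  toFun := fun s => Function.update s j (-∑ i, s i)
  map_add' := by
    classical
    intro s t
    funext k
    simp only [Function.update_apply, Pi.add_apply]
    split_ifs with h
    · simp [Finset.sum_add_distrib]; ring
    · rfl
  map_smul' := by
    classical
    intro c s
    funext k
    simp only [Function.update_apply, Pi.smul_apply, smul_eq_mul, RingHom.id_apply]
    split_ifs with h
    · simp [Finset.mul_sum]
    · rfl

lemma Tlin_comp (d : ℕ) (j : Fin d) : (Tlin d j).comp (Tlin d j) = LinearMap.id := by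
  classical
  refine LinearMap.ext fun s => ?_
  show Tlin d j (Tlin d j s) = s
  have hsum : ∑ i, (Tlin d j s) i = - s j := by
    show ∑ i, Function.update s j (-∑ i, s i) i = - s j
    rw [Finset.sum_update_of_mem (Finset.mem_univ j), ← Finset.erase_eq,
      Finset.sum_erase_eq_sub (Finset.mem_univ j)]
    ring
  show Function.update (Tlin d j s) j (-∑ i, (Tlin d j s) i) = s
  rw [hsum, neg_neg]
  show Function.update (Function.update s j (-∑ i, s i)) j (s j) = s
  rw [Function.update_idem, Function.update_eq_self]

lemma Tlin_det_ne (d : ℕ) (j : Fin d) : (Tlin d j).det ≠ 0 ∧ |(Tlin d j).det| = 1 := by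
  have h : (Tlin d j).det * (Tlin d j).det = 1 := by
    rw [← LinearMap.det_comp, Tlin_comp, LinearMap.det_id]
  rcases mul_self_eq_one_iff.1 h with h1 | h1 <;> rw [h1] <;> norm_num

lemma Tpreserve (d : ℕ) (j : Fin d) : MeasurePreserving (Tmap d j) volume volume := by
  obtain ⟨hne, habs⟩ := Tlin_det_ne d j
  have h1 : Measure.map (Tlin d j) volume = volume := by
    rw [Real.map_linearMap_volume_pi_eq_smul_volume_pi hne, abs_inv, habs]
    simp
  have hTeq : Tmap d j = (fun x => Pi.single j (1:ℝ) + x) ∘ (Tlin d j) := by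
    classical
    funext s k
    simp only [Function.comp_apply, Pi.add_apply, Tmap]
    have hl : Tlin d j s = Function.update s j (-∑ i, s i) := rfl
    rw [hl]
    rcases eq_or_ne k j with rfl | hk
    · rw [Function.update_self, Function.update_self, Pi.single_eq_same]; ring
    · rw [Function.update_of_ne hk, Function.update_of_ne hk, Pi.single_eq_of_ne hk]; ring
  refine ⟨Tmeas j, ?_⟩
  have hlinmeas : Measurable (Tlin d j) := by
    classical
    refine measurable_pi_lambda _ fun k => ?_
    show Measurable fun s => Function.update s j (-∑ i, s i) k
    simp only [Function.update_apply]
    by_cases hk : k = j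
    · simp only [if_pos hk]
      exact (Finset.measurable_sum Finset.univ fun i _ => measurable_pi_apply i).neg
    · simp only [if_neg hk]
      exact measurable_pi_apply k
  have haddmeas : Measurable fun x : Fin d → ℝ => Pi.single j (1:ℝ) + x :=
    measurable_id.const_add _
  rw [hTeq, ← Measure.map_map haddmeas hlinmeas, h1]
  exact MeasureTheory.map_add_left_eq_self volume _

def Tequiv (d : ℕ) (j : Fin d) : (Fin d → ℝ) ≃ᵐ (Fin d → ℝ) where
  toEquiv := ⟨Tmap d j, Tmap d j, Tinvol j, Tinvol j⟩
  measurable_toFun := Tmeas j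
  measurable_invFun := Tmeas j

lemma Fmeas (d : ℕ) (a : ℝ) :
    Measurable fun s : Fin d → ℝ => ((1 - ∑ i, s i) * ∏ i, s i) ^ (-a) :=
  (measurable_rpow_const' (-a)).comp
    ((measurable_const.sub (Finset.measurable_sum _ fun i _ => measurable_pi_apply i)).mul
      (Finset.measurable_prod _ fun i _ => measurable_pi_apply i))

lemma gmeas (d : ℕ) (a : ℝ) : Measurable fun s : Fin d → ℝ => ∏ i, (s i) ^ (-a) :=
  Finset.measurable_prod _ fun i _ => (measurable_rpow_const' (-a)).comp (measurable_pi_apply i)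

lemma g_int (d : ℕ) {a : ℝ} (ha0 : 0 < a) (ha1 : a < 1) :
    IntegrableOn (fun s : Fin d → ℝ => ∏ i, (s i) ^ (-a)) (Sd d) := by
  classical
  set f0 : ℝ → ℝ := (Set.Ioc (0:ℝ) 1).indicator (fun x => x ^ (-a)) with hf0def
  have hIoc : IntegrableOn (fun x : ℝ => x ^ (-a)) (Set.Ioc 0 1) := by
    have h := intervalIntegral.intervalIntegrable_rpow' (a := 0) (b := 1) (r := -a)
      (by linarith)
    rwa [intervalIntegrable_iff_integrableOn_Ioc_of_le zero_le_one] at h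
  have hf0 : Integrable f0 := (integrable_indicator_iff measurableSet_Ioc).2 hIoc
  have hG : Integrable fun s : Fin d → ℝ => ∏ i, f0 (s i) :=
    Integrable.fintype_prod (𝕜 := ℝ) fun _ => hf0
  refine (hG.integrableOn).congr_fun ?_ (Sd_measurable d)
  intro s hs
  by_cases hpos : ∀ i, 0 < s i
  · refine Finset.prod_congr rfl fun i _ => ?_
    rw [hf0def, Set.indicator_of_mem (Set.mem_Ioc.2 ⟨hpos i, (hs.1 i).2⟩)]
  · push_neg at hpos
    obtain ⟨i, hi⟩ := hpos
    have hi0 : s i = 0 := le_antisymm hi (hs.1 i).1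
    have h1 : (∏ i, f0 (s i)) = 0 :=
      Finset.prod_eq_zero (Finset.mem_univ i)
        (by rw [hi0, hf0def, Set.indicator_of_notMem (by simp [Set.mem_Ioc])])
    have h2 : (∏ i, (s i) ^ (-a)) = 0 :=
      Finset.prod_eq_zero (Finset.mem_univ i)
        (by rw [hi0, Real.zero_rpow (neg_ne_zero.2 ha0.ne')])
    show (∏ i, f0 (s i)) = ∏ i, (s i) ^ (-a)
    rw [h1, h2]

lemma gT_int (d : ℕ) (j : Fin d) {a : ℝ} (ha0 : 0 < a) (ha1 : a < 1) :
    IntegrableOn (fun s : Fin d → ℝ => ∏ i, (Tmap d j s i) ^ (-a)) (Sd d) := by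
  have h := (Tpreserve d j).integrableOn_comp_preimage
    ((Tequiv d j).measurableEmbedding)
    (f := fun s : Fin d → ℝ => ∏ i, (s i) ^ (-a)) (s := Sd d)
  rw [Tpreim] at h
  exact h.2 (g_int d ha0 ha1)

lemma key_bound (d : ℕ) {a : ℝ} (ha0 : 0 ≤ a) {s : Fin d → ℝ} (hs : s ∈ Sd d) :
    ((1 - ∑ i, s i) * ∏ i, s i) ^ (-a) ≤
      ((d:ℝ)+1)^a * ((∏ i, (s i) ^ (-a)) + ∑ j, ∏ i, (Tmap d j s i) ^ (-a)) := by
  classical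
  obtain ⟨h1, h2⟩ := hs
  have hx0 : 0 ≤ 1 - ∑ i, s i := by linarith
  have hprod0 : 0 ≤ ∏ i, s i := Finset.prod_nonneg fun i _ => (h1 i).1
  have hgnn : 0 ≤ ∏ i, (s i)^(-a) :=
    Finset.prod_nonneg fun i _ => Real.rpow_nonneg (h1 i).1 _
  have hgTnn : ∀ j, 0 ≤ ∏ i, (Tmap d j s i)^(-a) := fun j =>
    Finset.prod_nonneg fun i _ => Real.rpow_nonneg ((TmapsTo j ⟨h1, h2⟩).1 i).1 _
  have hsplit : ((1 - ∑ i, s i) * ∏ i, s i) ^ (-a)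
      = (1 - ∑ i, s i) ^ (-a) * ∏ i, (s i) ^ (-a) := by
    rw [Real.mul_rpow hx0 hprod0, Real.finset_prod_rpow _ _ (fun i _ => (h1 i).1) _]
  have hd1 : (0:ℝ) < (d:ℝ) + 1 := by positivity
  have hpowle : ∀ x : ℝ, ((d:ℝ)+1)⁻¹ ≤ x → x ^ (-a) ≤ ((d:ℝ)+1) ^ a := by
    intro x hx
    have h := Real.rpow_le_rpow_of_nonpos (by positivity : (0:ℝ) < ((d:ℝ)+1)⁻¹) hx
      (neg_nonpos.2 ha0)
    calc x ^ (-a) ≤ (((d:ℝ)+1)⁻¹) ^ (-a) := h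
      _ = ((d:ℝ)+1) ^ a := by
          rw [Real.inv_rpow hd1.le, Real.rpow_neg hd1.le, inv_inv]
  by_cases hc : ((d:ℝ)+1)⁻¹ ≤ 1 - ∑ i, s i
  · have hle : (1 - ∑ i, s i)^(-a) ≤ ((d:ℝ)+1)^a := hpowle _ hc
    rw [hsplit]
    calc (1 - ∑ i, s i)^(-a) * ∏ i, (s i)^(-a)
        ≤ ((d:ℝ)+1)^a * ∏ i, (s i)^(-a) := mul_le_mul_of_nonneg_right hle hgnn
      _ ≤ _ := by
        refine mul_le_mul_of_nonneg_left ?_ (Real.rpow_nonneg hd1.le a)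
        have hnn : 0 ≤ ∑ j, ∏ i, (Tmap d j s i)^(-a) :=
          Finset.sum_nonneg fun j _ => hgTnn j
        linarith
  · have hex : ∃ j, ((d:ℝ)+1)⁻¹ ≤ s j := by
      by_contra hno
      push_neg at hno
      have hsum : ∑ i, s i ≤ (d:ℝ) * ((d:ℝ)+1)⁻¹ := by
        calc ∑ i, s i ≤ ∑ _i : Fin d, ((d:ℝ)+1)⁻¹ :=
            Finset.sum_le_sum fun i _ => (hno i).le
          _ = (d:ℝ) * ((d:ℝ)+1)⁻¹ := by
            rw [Finset.sum_const, Finset.card_univ, Fintype.card_fin, nsmul_eq_mul]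
      push_neg at hc
      nlinarith [mul_inv_cancel₀ hd1.ne']
    obtain ⟨j, hj⟩ := hex
    have hTj : ∏ i, (Tmap d j s i)^(-a)
        = (1 - ∑ i, s i)^(-a) * ∏ i ∈ Finset.univ.erase j, (s i)^(-a) := by
      rw [← Finset.mul_prod_erase Finset.univ _ (Finset.mem_univ j)]
      congr 1
      · rw [Tmap, Function.update_self]
      · refine Finset.prod_congr rfl fun i hi => ?_
        rw [Tmap, Function.update_of_ne (Finset.ne_of_mem_erase hi)]
    have hgsplit : ∏ i, (s i)^(-a)
        = (s j)^(-a) * ∏ i ∈ Finset.univ.erase j, (s i)^(-a) :=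
      (Finset.mul_prod_erase Finset.univ _ (Finset.mem_univ j)).symm
    have herasenn : 0 ≤ ∏ i ∈ Finset.univ.erase j, (s i)^(-a) :=
      Finset.prod_nonneg fun i _ => Real.rpow_nonneg (h1 i).1 _
    have hx0nn : 0 ≤ (1 - ∑ i, s i)^(-a) := Real.rpow_nonneg hx0 _
    have hFle : ((1 - ∑ i, s i) * ∏ i, s i)^(-a)
        ≤ ((d:ℝ)+1)^a * ∏ i, (Tmap d j s i)^(-a) := by
      rw [hsplit, hgsplit, hTj]
      have hsj : (s j)^(-a) ≤ ((d:ℝ)+1)^a := hpowle _ hj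
      calc (1 - ∑ i, s i)^(-a) * ((s j)^(-a) * ∏ i ∈ Finset.univ.erase j, (s i)^(-a))
          = (s j)^(-a) * ((1 - ∑ i, s i)^(-a) * ∏ i ∈ Finset.univ.erase j, (s i)^(-a)) := by
            ring
        _ ≤ ((d:ℝ)+1)^a * ((1 - ∑ i, s i)^(-a) * ∏ i ∈ Finset.univ.erase j, (s i)^(-a)) :=
            mul_le_mul_of_nonneg_right hsj (mul_nonneg hx0nn herasenn)
    refine hFle.trans ?_
    refine mul_le_mul_of_nonneg_left ?_ (Real.rpow_nonneg hd1.le a)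
    have hsle : ∏ i, (Tmap d j s i)^(-a) ≤ ∑ j', ∏ i, (Tmap d j' s i)^(-a) :=
      Finset.single_le_sum (fun j' _ => hgTnn j') (Finset.mem_univ j)
    linarith

lemma backward (d : ℕ) {a : ℝ} (ha1 : a < 1) :
    IntegrableOn (fun s : Fin d → ℝ => ((1 - ∑ i, s i) * ∏ i, s i) ^ (-a)) (Sd d) := by
  rcases le_or_gt a 0 with ha0 | ha0
  · have hvol : volume (Sd d) < ⊤ := by
      have hsub : Sd d ⊆ Set.pi Set.univ fun _ : Fin d => Set.Icc (0:ℝ) 1 := by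
        intro s hs
        rw [Set.mem_univ_pi]
        exact fun i => ⟨(hs.1 i).1, (hs.1 i).2⟩
      calc volume (Sd d) ≤ volume (Set.pi Set.univ fun _ : Fin d => Set.Icc (0:ℝ) 1) :=
          measure_mono hsub
        _ = ∏ _i : Fin d, volume (Set.Icc (0:ℝ) 1) := volume_pi_pi _
        _ < ⊤ := by simp [Real.volume_Icc]
    refine Integrable.mono' (g := fun _ => (1:ℝ)) ?_ ?_ ?_
    · exact integrableOn_const hvol.ne
    · exact (Fmeas d a).aestronglyMeasurable
    · refine (ae_restrict_iff' (Sd_measurable d)).2 (ae_of_all _ fun s hs => ?_)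
      have h1 := hs.1
      have h2 := hs.2
      have hx0 : 0 ≤ 1 - ∑ i, s i := by linarith
      have hprod0 : 0 ≤ ∏ i, s i := Finset.prod_nonneg fun i _ => (h1 i).1
      have hprod1 : ∏ i, s i ≤ 1 :=
        Finset.prod_le_one (fun i _ => (h1 i).1) (fun i _ => (h1 i).2)
      have hbase0 : 0 ≤ (1 - ∑ i, s i) * ∏ i, s i := mul_nonneg hx0 hprod0
      have hsum0 : 0 ≤ ∑ i, s i := Finset.sum_nonneg fun i _ => (h1 i).1
      have hbase1 : (1 - ∑ i, s i) * ∏ i, s i ≤ 1 := by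
        have := mul_le_mul (by linarith : 1 - ∑ i, s i ≤ 1) hprod1 hprod0 zero_le_one
        linarith
      rw [Real.norm_eq_abs, abs_of_nonneg (Real.rpow_nonneg hbase0 _)]
      exact Real.rpow_le_one hbase0 hbase1 (neg_nonneg.2 ha0)
  · have hg := g_int d ha0 ha1
    have hgT := fun j => gT_int d j ha0 ha1
    have hH : IntegrableOn (fun s : Fin d → ℝ =>
        ((d:ℝ)+1)^a * ((∏ i, (s i) ^ (-a)) + ∑ j, ∏ i, (Tmap d j s i) ^ (-a))) (Sd d) :=
      ((hg.add (integrable_finset_sum Finset.univ fun j _ => hgT j)).const_mul _)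
    refine Integrable.mono' hH (Fmeas d a).aestronglyMeasurable ?_
    refine (ae_restrict_iff' (Sd_measurable d)).2 (ae_of_all _ fun s hs => ?_)
    have hbase0 : 0 ≤ (1 - ∑ i, s i) * ∏ i, s i :=
      mul_nonneg (by have := hs.2; linarith) (Finset.prod_nonneg fun i _ => (hs.1 i).1)
    rw [Real.norm_eq_abs, abs_of_nonneg (Real.rpow_nonneg hbase0 _)]
    exact key_bound d ha0.le hs

lemma forward (n : ℕ) {a : ℝ} (ha : 1 ≤ a)
    (h : IntegrableOn (fun s : Fin (n+1) → ℝ => ((1 - ∑ i, s i) * ∏ i, s i) ^ (-a))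
      (Sd (n+1))) : False := by
  classical
  set lo : ℝ := ((4:ℝ) * ((n:ℝ)+1))⁻¹ with hlodef
  set hi : ℝ := ((2:ℝ) * ((n:ℝ)+1))⁻¹ with hhidef
  have hn1 : (0:ℝ) < (n:ℝ) + 1 := by positivity
  have hlo : 0 < lo := by rw [hlodef]; positivity
  have hlohi : lo < hi := by
    rw [hlodef, hhidef]
    apply inv_strictAnti₀ (by positivity)
    nlinarith
  have hhi2 : hi ≤ 1/2 := by
    rw [hhidef]
    rw [show (1:ℝ)/2 = ((2:ℝ))⁻¹ by norm_num]
    apply inv_anti₀ (by norm_num)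
    nlinarith
  set I : Fin (n+1) → Set ℝ := Fin.cons (Set.Ioo 0 (1/4)) (fun _ => Set.Ioo lo hi) with hIdef
  set B := Set.pi Set.univ I with hBdef
  have hImeas : ∀ i, MeasurableSet (I i) := by
    intro i
    refine Fin.cases ?_ ?_ i
    · rw [hIdef]; simpa using measurableSet_Ioo
    · intro k; rw [hIdef]; simpa using measurableSet_Ioo
  have hBmeas : MeasurableSet B := MeasurableSet.univ_pi hImeas
  -- membership
  have hmemB : ∀ s : Fin (n+1) → ℝ, s ∈ B ↔
      (0 < s 0 ∧ s 0 < 1/4) ∧ ∀ k : Fin n, lo < s k.succ ∧ s k.succ < hi := by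
    intro s
    rw [hBdef, Set.mem_univ_pi, Fin.forall_fin_succ]
    constructor
    · rintro ⟨h0, hsucc⟩
      refine ⟨by simpa [hIdef] using h0, fun k => by simpa [hIdef] using hsucc k⟩
    · rintro ⟨h0, hsucc⟩
      exact ⟨by simpa [hIdef] using h0, fun k => by simpa [hIdef] using hsucc k⟩
  have hnhi : (n:ℝ) * hi ≤ 1/2 := by
    rw [hhidef]
    have hc : (0:ℝ) < 2 * ((n:ℝ)+1) := by positivity
    have hci := mul_inv_cancel₀ hc.ne'
    nlinarith [inv_nonneg.2 hc.le]
  have hsumlt : ∀ s ∈ B, ∑ i, s i < 3/4 := by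
    intro s hsB
    rw [hmemB] at hsB
    obtain ⟨h0, hsucc⟩ := hsB
    rw [Fin.sum_univ_succ]
    have hsum : ∑ k : Fin n, s k.succ ≤ (n:ℝ) * hi := by
      calc ∑ k : Fin n, s k.succ ≤ ∑ _k : Fin n, hi :=
          Finset.sum_le_sum fun k _ => (hsucc k).2.le
        _ = (n:ℝ) * hi := by
          rw [Finset.sum_const, Finset.card_univ, Fintype.card_fin, nsmul_eq_mul]
    linarith [h0.2]
  have hBsub : B ⊆ Sd (n+1) := by
    intro s hsB
    have hsB' := (hmemB s).1 hsB
    obtain ⟨h0, hsucc⟩ := hsB'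
    constructor
    · intro i
      refine Fin.cases ?_ ?_ i
      · exact ⟨h0.1.le, by linarith [h0.2]⟩
      · intro k
        exact ⟨by linarith [(hsucc k).1], by linarith [(hsucc k).2, hhi2]⟩
    · linarith [hsumlt s hsB]
  -- lower bound
  have hlow : ∀ s ∈ B, 0 < s 0 ∧ (s 0) ^ (-a) ≤ ((1 - ∑ i, s i) * ∏ i, s i) ^ (-a) := by
    intro s hsB
    have hsB' := (hmemB s).1 hsB
    obtain ⟨h0, hsucc⟩ := hsB'
    have hP0 : 0 < ∏ k : Fin n, s k.succ :=
      Finset.prod_pos fun k _ => by linarith [(hsucc k).1]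
    have hP1 : ∏ k : Fin n, s k.succ ≤ 1 :=
      Finset.prod_le_one (fun k _ => by linarith [(hsucc k).1])
        (fun k _ => by linarith [(hsucc k).2, hhi2])
    have hprodeq : ∏ i, s i = s 0 * ∏ k : Fin n, s k.succ := Fin.prod_univ_succ _
    have hsum := hsumlt s hsB
    have hbasepos : 0 < (1 - ∑ i, s i) * ∏ i, s i := by
      rw [hprodeq]
      have h' : 0 < 1 - ∑ i, s i := by linarith
      exact mul_pos h' (mul_pos h0.1 hP0)
    have hbasele : (1 - ∑ i, s i) * ∏ i, s i ≤ s 0 := by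
      rw [hprodeq]
      have h1 : 1 - ∑ i, s i ≤ 1 := by
        have : 0 ≤ ∑ i, s i := by
          have := hBsub hsB
          exact Finset.sum_nonneg fun i _ => (this.1 i).1
        linarith
      have h2 : s 0 * ∏ k : Fin n, s k.succ ≤ s 0 := by
        nlinarith [h0.1]
      nlinarith [h0.1, mul_pos h0.1 hP0]
    exact ⟨h0.1, Real.rpow_le_rpow_of_nonpos hbasepos hbasele (by linarith)⟩
  -- integrability of the pure power on B
  have hIB : IntegrableOn (fun s : Fin (n+1) → ℝ => (s 0) ^ (-a)) B := by
    refine Integrable.mono' (h.mono_set hBsub) ?_ ?_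
    · exact ((measurable_rpow_const' (-a)).comp (measurable_pi_apply 0)).aestronglyMeasurable
    · refine (ae_restrict_iff' hBmeas).2 (ae_of_all _ fun s hsB => ?_)
      obtain ⟨hs0, hle⟩ := hlow s hsB
      rw [Real.norm_eq_abs, abs_of_nonneg (Real.rpow_nonneg hs0.le _)]
      exact hle
  have hInd : Integrable (Set.indicator B fun s : Fin (n+1) → ℝ => (s 0) ^ (-a)) :=
    (integrable_indicator_iff hBmeas).2 hIB
  -- transport to a product space
  have hmp := measurePreserving_piFinSuccAbove (fun _ : Fin (n+1) => (volume : Measure ℝ)) 0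
  set e := MeasurableEquiv.piFinSuccAbove (fun _ : Fin (n+1) => ℝ) 0 with hedef
  set C := Set.pi Set.univ fun _ : Fin n => Set.Ioo lo hi with hCdef
  have hint2 : Integrable ((Set.indicator B fun s : Fin (n+1) → ℝ => (s 0) ^ (-a)) ∘ e.symm)
      ((volume : Measure ℝ).prod (Measure.pi fun _ : Fin n => (volume : Measure ℝ))) := by
    rw [(MeasurePreserving.symm e hmp).integrable_comp_emb
      (MeasurableEquiv.measurableEmbedding e.symm)]
    rw [← volume_pi]
    exact hInd
  have hfun : ((Set.indicator B fun s : Fin (n+1) → ℝ => (s 0) ^ (-a)) ∘ e.symm)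
      = fun p : ℝ × (Fin n → ℝ) =>
        (Set.indicator (Set.Ioo (0:ℝ) (1/4)) (fun x => x ^ (-a)) p.1)
          * (Set.indicator C (fun _ => (1:ℝ)) p.2) := by
    funext p
    obtain ⟨x, y⟩ := p
    have hesymm : e.symm (x, y) = Fin.cons x y := by
      rw [hedef]
      simp [MeasurableEquiv.piFinSuccAbove_symm_apply, Fin.insertNth_zero, Fin.consEquiv]
    simp only [Function.comp_apply, hesymm]
    have hmem : (Fin.cons x y : Fin (n+1) → ℝ) ∈ B ↔
        x ∈ Set.Ioo (0:ℝ) (1/4) ∧ y ∈ C := by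
      rw [hmemB]
      simp only [Fin.cons_zero, Fin.cons_succ, hCdef, Set.mem_univ_pi, Set.mem_Ioo]
    by_cases hxy : (Fin.cons x y : Fin (n+1) → ℝ) ∈ B
    · rw [Set.indicator_of_mem hxy]
      obtain ⟨hx, hy⟩ := hmem.1 hxy
      rw [Set.indicator_of_mem hx, Set.indicator_of_mem hy, Fin.cons_zero, mul_one]
    · rw [Set.indicator_of_notMem hxy]
      rw [hmem, not_and_or] at hxy
      rcases hxy with hx | hy
      · rw [Set.indicator_of_notMem hx, zero_mul]
      · rw [Set.indicator_of_notMem hy, mul_zero]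
  rw [hfun] at hint2
  -- a.e. sections are integrable
  have hsec := hint2.prod_left_ae
  -- C has positive measure
  have hCvol : (Measure.pi fun _ : Fin n => (volume : Measure ℝ)) C ≠ 0 := by
    rw [hCdef, Measure.pi_pi]
    simp only [Real.volume_Ioo]
    rw [Finset.prod_const]
    apply pow_ne_zero
    simp only [ne_eq, ENNReal.ofReal_eq_zero, not_le]
    linarith
  -- pick a good point of C
  obtain ⟨y, hyC, hyint⟩ : ∃ y, y ∈ C ∧
      Integrable (fun x : ℝ => (Set.indicator (Set.Ioo (0:ℝ) (1/4)) (fun x => x ^ (-a)) x)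
        * (Set.indicator C (fun _ => (1:ℝ)) y)) := by
    by_contra hcon
    push_neg at hcon
    rw [ae_iff] at hsec
    have hsub : C ⊆ {y | ¬ Integrable (fun x : ℝ =>
        (Set.indicator (Set.Ioo (0:ℝ) (1/4)) (fun x => x ^ (-a)) x)
          * (Set.indicator C (fun _ => (1:ℝ)) y))} := fun y hy => hcon y hy
    exact hCvol (le_antisymm (le_trans (measure_mono hsub) (le_of_eq hsec)) zero_le)
  have hψ : Integrable (Set.indicator (Set.Ioo (0:ℝ) (1/4)) (fun x => x ^ (-a))) := by
    have h1 : Set.indicator C (fun _ => (1:ℝ)) y = 1 := Set.indicator_of_mem hyC _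
    simpa [h1] using hyint
  rw [integrable_indicator_iff measurableSet_Ioo] at hψ
  rw [intervalIntegral.integrableOn_Ioo_rpow_iff (by norm_num : (0:ℝ) < 1/4)] at hψ
  linarith

end AuxiliaryLemmas

/-- the map `s ↦ ((1-‖s‖₁) s_1 ⋯ s_d)^{-a}` is Lebesgue-integrable on
the simplex `S_d` if and only if `a < 1`. -/
theorem integrable_boundary_power_iff (d : ℕ) (hd : 1 ≤ d) (a : ℝ) :
    MeasureTheory.IntegrableOn
        (fun s : Fin d → ℝ => ((1 - ∑ i, s i) * ∏ i, s i) ^ (-a)) (Sd d) ↔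
      a < 1 := by
  constructor
  · intro h
    by_contra hcon
    push_neg at hcon
    obtain ⟨n, rfl⟩ : ∃ n, d = n + 1 := ⟨d - 1, (Nat.succ_pred_eq_of_pos hd).symm⟩
    exact forward n hcon h
  · intro ha1
    exact backward d ha1
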